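/- Let G = (V ∪ W, E) be a bipartite graph with activation probabilities q : E → [0,1], and let f(X) = γ · Σ_{w ∈ W} Q(X, w) where Q(X,w) = 1 - ∏_{x ∈ X, (x,w) ∈ E}(1 - q(x,w)) and γ > 0. Then for any X ⊆ V with |X| = s and x ∈ X with f({x}) > 0, we have (f(X) - f(X \ {x}))/f({x}) ≥ 1 - max_{w : (x,w) ∈ E} Q(X \ {x}, w). Consequently the curvature κ(s) satisfies κ(s) ≤ max over |X| = s, x ∈ X, (x,w) ∈ E of Q(X \ {x}, w). -/

import Mathlib

/-- Curvature bound for the bipartite influence model valuation (Lemma 1). -/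
theorem stmt3 {V W : Type*} [DecidableEq V] [DecidableEq W] [Fintype V] [Fintype W]
    (E : Finset (V × W)) (q : V × W → ℝ) (γ : ℝ) (hγ : 0 < γ)
    (hq : ∀ e ∈ E, 0 ≤ q e ∧ q e ≤ 1)
    (Q : Finset V → W → ℝ)
    (hQ : ∀ (X : Finset V) (w : W),
      Q X w = 1 - ∏ x ∈ X.filter (fun x => (x, w) ∈ E), (1 - q (x, w)))
    (f : Finset V → ℝ)
    (hf : ∀ X : Finset V, f X = γ * ∑ w : W, Q X w)
    (hpos : ∀ x : V, 0 < f {x})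
    (s : ℕ) (hs1 : 1 ≤ s) (hs2 : s ≤ Fintype.card V)
    (κ : ℕ → ℝ)
    (hκ : ∀ t : ℕ, κ t = 1 - sInf {r : ℝ | ∃ (X : Finset V) (x : V),
        X.card = t ∧ x ∈ X ∧ r = (f X - f (X.erase x)) / f {x}}) :
    (∀ (X : Finset V) (x : V), X.card = s → x ∈ X →
      ∀ hne : (Finset.univ.filter (fun w : W => (x, w) ∈ E)).Nonempty,
        (f X - f (X.erase x)) / f {x} ≥
          1 - (Finset.univ.filter (fun w : W => (x, w) ∈ E)).sup' hne
                (fun w => Q (X.erase x) w)) ∧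
    κ s ≤ sSup {r : ℝ | ∃ (X : Finset V) (x : V) (w : W),
        X.card = s ∧ x ∈ X ∧ (x, w) ∈ E ∧ r = Q (X.erase x) w} := by
  -- Q is at most 1
  have hQle : ∀ (X : Finset V) (w : W), Q X w ≤ 1 := by
    intro X w
    rw [hQ]
    have : (0:ℝ) ≤ ∏ x ∈ X.filter (fun x => (x, w) ∈ E), (1 - q (x, w)) :=
      Finset.prod_nonneg (fun y hy => by
        have := (hq (y, w) (Finset.mem_filter.mp hy).2).2
        linarith)
    linarith
  -- difference of Q
  have hdiff : ∀ (X : Finset V) (x : V), x ∈ X → ∀ w : W,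
      Q X w - Q (X.erase x) w =
        if (x, w) ∈ E then q (x, w) * (1 - Q (X.erase x) w) else 0 := by
    intro X x hx w
    rw [hQ, hQ]
    by_cases h : (x, w) ∈ E
    · simp only [h, if_true]
      have hxf : x ∈ X.filter (fun y => (y, w) ∈ E) := Finset.mem_filter.mpr ⟨hx, h⟩
      have heq : (X.erase x).filter (fun y => (y, w) ∈ E)
          = (X.filter (fun y => (y, w) ∈ E)).erase x := Finset.filter_erase _ _ _
      rw [← Finset.mul_prod_erase _ _ hxf, heq]
      ring
    · simp only [h, if_false]
      have heq : (X.erase x).filter (fun y => (y, w) ∈ E)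
          = X.filter (fun y => (y, w) ∈ E) := by
        rw [Finset.filter_erase]
        exact Finset.erase_eq_of_notMem (by simp [h])
      rw [heq]; ring
  -- difference of f
  have hsum : ∀ (X : Finset V) (x : V), x ∈ X →
      f X - f (X.erase x) = γ * ∑ w ∈ Finset.univ.filter (fun w : W => (x, w) ∈ E),
        q (x, w) * (1 - Q (X.erase x) w) := by
    intro X x hx
    rw [hf, hf, ← mul_sub, ← Finset.sum_sub_distrib]
    congr 1
    rw [Finset.sum_filter]
    exact Finset.sum_congr rfl (fun w _ => hdiff X x hx w)
  -- value of f on singletons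
  have hfx : ∀ x : V, f {x}
      = γ * ∑ w ∈ Finset.univ.filter (fun w : W => (x, w) ∈ E), q (x, w) := by
    intro x
    rw [hf]
    congr 1
    rw [Finset.sum_filter]
    refine Finset.sum_congr rfl (fun w _ => ?_)
    rw [hQ]
    by_cases h : (x, w) ∈ E
    · simp [h, Finset.filter_singleton]
    · simp [h, Finset.filter_singleton]
  -- every x has a neighbor
  have hneigh : ∀ x : V, (Finset.univ.filter (fun w : W => (x, w) ∈ E)).Nonempty := by
    intro x
    by_contra h
    rw [Finset.not_nonempty_iff_eq_empty] at h
    have := hfx x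
    rw [h] at this
    simp at this
    have := hpos x
    linarith
  -- main inequality
  have main : ∀ (X : Finset V) (x : V), x ∈ X →
      ∀ hne : (Finset.univ.filter (fun w : W => (x, w) ∈ E)).Nonempty,
        (f X - f (X.erase x)) / f {x} ≥
          1 - (Finset.univ.filter (fun w : W => (x, w) ∈ E)).sup' hne
                (fun w => Q (X.erase x) w) := by
    intro X x hx hne
    set N := Finset.univ.filter (fun w : W => (x, w) ∈ E) with hN
    set M := N.sup' hne (fun w => Q (X.erase x) w) with hM
    rw [ge_iff_le, le_div_iff₀ (hpos x), hsum X x hx, hfx x]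
    have h1 : (1 - M) * (γ * ∑ w ∈ N, q (x, w)) = γ * ∑ w ∈ N, q (x, w) * (1 - M) := by
      rw [Finset.mul_sum, Finset.mul_sum, Finset.mul_sum]
      exact Finset.sum_congr rfl (fun w _ => by ring)
    rw [h1]
    apply mul_le_mul_of_nonneg_left _ hγ.le
    apply Finset.sum_le_sum
    intro w hw
    have hqw := hq (x, w) (by simpa [hN] using hw)
    apply mul_le_mul_of_nonneg_left _ hqw.1
    have : Q (X.erase x) w ≤ M := Finset.le_sup' _ hw
    linarith
  refine ⟨fun X x _ hx hne => main X x hx hne, ?_⟩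
  -- second part
  set S : Set ℝ := {r : ℝ | ∃ (X : Finset V) (x : V) (w : W),
      X.card = s ∧ x ∈ X ∧ (x, w) ∈ E ∧ r = Q (X.erase x) w} with hS
  set R : Set ℝ := {r : ℝ | ∃ (X : Finset V) (x : V),
      X.card = s ∧ x ∈ X ∧ r = (f X - f (X.erase x)) / f {x}} with hR
  have hSbdd : BddAbove S := by
    refine ⟨1, fun r hr => ?_⟩
    obtain ⟨X, x, w, _, _, _, hr⟩ := hr
    rw [hr]; exact hQle _ _
  have hRne : R.Nonempty := by
    obtain ⟨X, _, hcard⟩ := Finset.exists_subset_card_eq (s := (Finset.univ : Finset V)) hs2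
    have hXne : X.Nonempty := Finset.card_pos.mp (by omega)
    obtain ⟨x, hx⟩ := hXne
    exact ⟨_, X, x, hcard, hx, rfl⟩
  have hbound : ∀ r ∈ R, 1 - sSup S ≤ r := by
    intro r hr
    obtain ⟨X, x, hcard, hx, hr⟩ := hr
    have hne := hneigh x
    have h1 := main X x hx hne
    obtain ⟨w0, hw0, hw0eq⟩ := Finset.exists_mem_eq_sup' hne (fun w => Q (X.erase x) w)
    have hw0E : (x, w0) ∈ E := (Finset.mem_filter.mp hw0).2
    have hmem : Q (X.erase x) w0 ∈ S := ⟨X, x, w0, hcard, hx, hw0E, rfl⟩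
    have hle : Q (X.erase x) w0 ≤ sSup S := le_csSup hSbdd hmem
    rw [hr]
    rw [hw0eq] at h1
    linarith
  have hInf : 1 - sSup S ≤ sInf R := le_csInf hRne hbound
  rw [hκ s]
  linarith
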